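/- Polynomial clustering of the massive GFF: let μ be the Gaussian free field measure on tempered distributions over ℝ⁴ with mass m > 0 and covariance S₂(f,g) = ∫∫ f(x) K(x−y) g(y) dx dy where |K(z)| ≤ C|z|^{−2} e^{−m|z|} for |z| ≥ R₀ and K is locally integrable. Then for any Schwartz functions f, g and any α > 0, there exists a constant C' such that |E_μ[e^{⟨ω,f⟩ + ⟨T_s ω, g⟩}] − E_μ[e^{⟨ω,f⟩}] E_μ[e^{⟨ω,g⟩}]| ≤ C' (1+s)^{−α} for all s ≥ 0. -/

import Mathlib

open MeasureTheory

/-- Real Schwartz test functions on ℝ⁴. -/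
abbrev SchwartzTestFunction : Type := SchwartzMap (EuclideanSpace ℝ (Fin 4)) ℝ

/-- Tempered distributions (the weak dual of Schwartz space). -/
abbrev FieldConfiguration : Type := WeakDual ℝ SchwartzTestFunction

noncomputable instance : MeasurableSpace FieldConfiguration := borel _

/-- The unit vector in the time direction. -/
noncomputable def timeDir : EuclideanSpace ℝ (Fin 4) := EuclideanSpace.single 0 (1 : ℝ)

section Aux

abbrev E4 := EuclideanSpace ℝ (Fin 4)

lemma norm_timeDir : ‖timeDir‖ = 1 := by
  simp [timeDir, EuclideanSpace.norm_single]

lemma abs_exp_sub_one_le (z : ℝ) : |Real.exp z - 1| ≤ |z| * Real.exp |z| := by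
  rcases le_or_gt 0 z with hz | hz
  · rw [abs_of_nonneg hz, abs_of_nonneg (by nlinarith [Real.add_one_le_exp z] : (0:ℝ) ≤ Real.exp z - 1)]
    have h1 := Real.add_one_le_exp (-z)
    have h2 : Real.exp (-z) = (Real.exp z)⁻¹ := Real.exp_neg z
    have h3 := Real.exp_pos z
    rw [h2] at h1
    have : (1 - z) * Real.exp z ≤ 1 := by
      have := mul_le_mul_of_nonneg_right h1 h3.le
      rw [inv_mul_cancel₀ h3.ne'] at this
      nlinarith
    nlinarith
  · rw [abs_of_neg hz, abs_of_nonpos (by nlinarith [Real.exp_lt_one_iff.mpr hz] : Real.exp z - 1 ≤ 0)]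
    have h1 := Real.add_one_le_exp z
    have h2 : (1:ℝ) ≤ Real.exp (-z) := by
      rw [Real.one_le_exp_iff]; linarith
    nlinarith [Real.exp_pos (-z)]

lemma one_add_pow_le (a : ℝ) (ha : 0 ≤ a) (k : ℕ) : (1+a)^k ≤ 2^k * (1 + a^k) := by
  rcases le_total a 1 with h | h
  · calc (1+a)^k ≤ 2^k := pow_le_pow_left₀ (by linarith) (by linarith) k
    _ ≤ 2^k * (1 + a^k) := by nlinarith [pow_nonneg ha k, pow_pos (by norm_num : (0:ℝ) < 2) k]
  · calc (1+a)^k ≤ (2*a)^k := pow_le_pow_left₀ (by linarith) (by linarith) k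
    _ = 2^k * a^k := mul_pow 2 a k
    _ ≤ 2^k * (1 + a^k) := by nlinarith [pow_pos (by norm_num : (0:ℝ) < 2) k]

set_option maxHeartbeats 1000000 in
lemma decay_core (m : ℝ) (hm : 0 < m) (K : E4 → ℝ) (hKloc : LocallyIntegrable K volume)
    (C R₀ : ℝ)
    (hKdecay : ∀ z : E4, R₀ ≤ ‖z‖ → |K z| ≤ C * ‖z‖ ^ (-(2:ℝ)) * Real.exp (-m * ‖z‖))
    (f g : SchwartzTestFunction) (k : ℕ) :
    ∃ C₃ : ℝ, 0 ≤ C₃ ∧ ∀ s : ℝ, 0 ≤ s →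
      |∫ x, ∫ y, f x * K (x - y) * g (y + s • timeDir)| ≤ C₃ / (1 + s) ^ k := by
  set R₁ : ℝ := max R₀ 1 with hR₁def
  have hR₁ : (1:ℝ) ≤ R₁ := le_max_right _ _
  have hR₁₀ : R₀ ≤ R₁ := le_max_left _ _
  have hC : 0 ≤ C := by
    have hz : ‖R₁ • timeDir‖ = R₁ := by
      rw [norm_smul, norm_timeDir, mul_one, Real.norm_eq_abs, abs_of_nonneg (by linarith)]
    have h := hKdecay (R₁ • timeDir) (by rw [hz]; exact hR₁₀)
    rw [hz] at h
    have h1 : (0:ℝ) < R₁ ^ (-(2:ℝ)) := Real.rpow_pos_of_pos (by linarith) _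
    have h2 := Real.exp_pos (-m * R₁)
    nlinarith [abs_nonneg (K (R₁ • timeDir)), mul_pos h1 h2]
  -- the singular part of K
  set K₁ : E4 → ℝ := (Metric.closedBall (0:E4) R₁).indicator (fun z => |K z|) with hK₁def
  have hK₁nn : ∀ z, 0 ≤ K₁ z := fun z => Set.indicator_nonneg (fun z _ => abs_nonneg _) z
  have hK₁int : Integrable K₁ volume := by
    have h1 : IntegrableOn K (Metric.closedBall 0 R₁) volume :=
      hKloc.integrableOn_isCompact (isCompact_closedBall 0 R₁)
    exact IntegrableOn.integrable_indicator h1.abs measurableSet_closedBall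
  have hK₁eq : ∀ z : E4, ‖z‖ ≤ R₁ → K₁ z = |K z| := fun z h =>
    Set.indicator_of_mem (by simpa [mem_closedBall_zero_iff] using h) _
  have hK₁zero : ∀ z : E4, R₁ < ‖z‖ → K₁ z = 0 := fun z h =>
    Set.indicator_of_notMem (by simp only [mem_closedBall_zero_iff]; linarith) _
  -- the dominating kernel
  set D : E4 → ℝ := fun z => K₁ z + C * Real.exp (-m * ‖z‖) with hDdef
  have hDnn : ∀ z, 0 ≤ D z := fun z => add_nonneg (hK₁nn z) (by positivity)
  have hKD : ∀ z, |K z| ≤ D z := by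
    intro z
    rcases le_or_gt ‖z‖ R₁ with h | h
    · have : K₁ z = |K z| := hK₁eq z h
      simp only [hDdef, this]
      nlinarith [mul_nonneg hC (Real.exp_pos (-m * ‖z‖)).le]
    · have hz : R₀ ≤ ‖z‖ := le_trans hR₁₀ h.le
      have h1 := hKdecay z hz
      have h2 : ‖z‖ ^ (-(2:ℝ)) ≤ 1 :=
        Real.rpow_le_one_of_one_le_of_nonpos (le_trans hR₁ h.le) (by norm_num)
      have h3 := Real.exp_pos (-m * ‖z‖)
      have h4 : (0:ℝ) < ‖z‖ ^ (-(2:ℝ)) := Real.rpow_pos_of_pos (by linarith) _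
      simp only [hDdef, hK₁zero z h, zero_add]
      nlinarith [mul_nonneg (mul_nonneg hC h3.le) (sub_nonneg.mpr h2)]
  -- Schwartz bounds
  obtain ⟨Mg, hMgpos, hMg⟩ : ∃ Mg : ℝ, 0 < Mg ∧ ∀ w : E4, (1+‖w‖)^k * |g w| ≤ Mg := by
    obtain ⟨C0, hC0p, hC0⟩ := g.decay 0 0
    obtain ⟨Ck, hCkp, hCk⟩ := g.decay k 0
    refine ⟨2^k * (C0 + Ck), by positivity, fun w => ?_⟩
    have e0 := hC0 w; have ek := hCk w
    rw [norm_iteratedFDeriv_zero] at e0 ek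
    simp only [pow_zero, one_mul] at e0
    have hb := one_add_pow_le ‖w‖ (norm_nonneg w) k
    rw [show |g w| = ‖g w‖ from (Real.norm_eq_abs _).symm]
    calc (1+‖w‖)^k * ‖g w‖ ≤ (2^k * (1+‖w‖^k)) * ‖g w‖ :=
          mul_le_mul_of_nonneg_right hb (norm_nonneg _)
    _ = 2^k * (‖g w‖ + ‖w‖^k * ‖g w‖) := by ring
    _ ≤ 2^k * (C0 + Ck) := by
          apply mul_le_mul_of_nonneg_left (by linarith) (by positivity)
  set φ : E4 → ℝ := fun w => (1+‖w‖)^k * |g w| with hφdef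
  have hφnn : ∀ w, 0 ≤ φ w := fun w => by positivity
  have hφcont : Continuous φ :=
    (((continuous_const.add continuous_norm).pow k).mul g.continuous.abs)
  have hφle : ∀ w, φ w ≤ 2^k * (‖g w‖ + ‖w‖^k * ‖g w‖) := by
    intro w
    have hb := one_add_pow_le ‖w‖ (norm_nonneg w) k
    calc φ w ≤ (2^k * (1+‖w‖^k)) * |g w| :=
          mul_le_mul_of_nonneg_right hb (abs_nonneg _)
    _ = 2^k * (‖g w‖ + ‖w‖^k * ‖g w‖) := by rw [Real.norm_eq_abs]; ring
  have hφint : Integrable φ volume := by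
    have h1 := (SchwartzMap.integrable g (μ := volume)).norm
    have h2 := g.integrable_pow_mul volume k
    refine ((h1.add h2).const_mul (2^k)).mono' hφcont.aestronglyMeasurable
      (Filter.Eventually.of_forall fun w => ?_)
    rw [Real.norm_eq_abs, abs_of_nonneg (hφnn w)]
    exact hφle w
  have hgφ : ∀ w, |g w| ≤ φ w := by
    intro w
    have h1 : (1:ℝ) ≤ (1+‖w‖)^k := one_le_pow₀ (by linarith [norm_nonneg w])
    calc |g w| = 1 * |g w| := (one_mul _).symm
    _ ≤ (1+‖w‖)^k * |g w| := mul_le_mul_of_nonneg_right h1 (abs_nonneg _)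
  set Ng := ∫ w, φ w with hNgdef
  have hNgnn : 0 ≤ Ng := integral_nonneg hφnn
  have hIg : ∫ w, |g w| ≤ Ng :=
    integral_mono (SchwartzMap.integrable g).abs hφint hgφ
  -- same for f
  set ψ : E4 → ℝ := fun x => (1+‖x‖)^k * |f x| with hψdef
  have hψnn : ∀ x, 0 ≤ ψ x := fun x => by positivity
  have hψint : Integrable ψ volume := by
    have h1 := (SchwartzMap.integrable f (μ := volume)).norm
    have h2 := f.integrable_pow_mul volume k
    refine ((h1.add h2).const_mul (2^k)).mono'
      (((continuous_const.add continuous_norm).pow k).mul f.continuous.abs).aestronglyMeasurable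
      (Filter.Eventually.of_forall fun x => ?_)
    rw [Real.norm_eq_abs, abs_of_nonneg (hψnn x)]
    have hb := one_add_pow_le ‖x‖ (norm_nonneg x) k
    calc ψ x ≤ (2^k * (1+‖x‖^k)) * |f x| :=
          mul_le_mul_of_nonneg_right hb (abs_nonneg _)
    _ = 2^k * (‖f x‖ + ‖x‖^k * ‖f x‖) := by rw [Real.norm_eq_abs]; ring
  have hfψ : ∀ x, |f x| ≤ ψ x := by
    intro x
    have h1 : (1:ℝ) ≤ (1+‖x‖)^k := one_le_pow₀ (by linarith [norm_nonneg x])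
    calc |f x| = 1 * |f x| := (one_mul _).symm
    _ ≤ (1+‖x‖)^k * |f x| := mul_le_mul_of_nonneg_right h1 (abs_nonneg _)
  set Nf := ∫ x, ψ x with hNfdef
  have hNfnn : 0 ≤ Nf := integral_nonneg hψnn
  set L := ∫ z, K₁ z with hLdef
  have hLnn : 0 ≤ L := integral_nonneg hK₁nn
  set B₁ := L * Mg + C * Ng with hB₁def
  have hB₁nn : 0 ≤ B₁ := add_nonneg (mul_nonneg hLnn hMgpos.le) (mul_nonneg hC hNgnn)
  -- convolution-type bounds
  have pairInt : ∀ (c' : E4) (θ : E4 → ℝ), Continuous θ → (∀ w, 0 ≤ θ w) →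
      (∀ w, θ w ≤ Mg) → Integrable θ volume →
      Integrable (fun w => D (c' - w) * θ w) volume ∧
        ∫ w, D (c' - w) * θ w ≤ L * Mg + C * ∫ w, θ w := by
    intro c' θ hθc hθnn hθb hθi
    have i1 : Integrable (fun w => K₁ (c' - w) * θ w) volume := by
      have := Integrable.bdd_mul (hK₁int.comp_sub_left c') hθc.aestronglyMeasurable
        (c := Mg) (Filter.Eventually.of_forall fun w => by rw [Real.norm_eq_abs, abs_of_nonneg (hθnn w)]; exact hθb w)
      simpa [mul_comm] using this
    have i2 : Integrable (fun w => (C * Real.exp (-m * ‖c' - w‖)) * θ w) volume := by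
      refine (hθi.const_mul C).mono' ?_ (Filter.Eventually.of_forall fun w => ?_)
      · apply Continuous.aestronglyMeasurable
        exact (continuous_const.mul (Real.continuous_exp.comp
          (continuous_const.mul (continuous_const.sub continuous_id).norm))).mul hθc
      · have he : Real.exp (-m * ‖c' - w‖) ≤ 1 :=
          Real.exp_le_one_iff.mpr (by nlinarith [norm_nonneg (c' - w)])
        rw [Real.norm_eq_abs, abs_of_nonneg
          (mul_nonneg (mul_nonneg hC (Real.exp_pos _).le) (hθnn w))]
        nlinarith [mul_nonneg (mul_nonneg hC (hθnn w)) (sub_nonneg.mpr he)]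
    have hsplit : (fun w => D (c' - w) * θ w) =
        fun w => K₁ (c' - w) * θ w + (C * Real.exp (-m * ‖c' - w‖)) * θ w := by
      funext w; simp only [hDdef]; ring
    constructor
    · rw [hsplit]; exact i1.add i2
    · rw [hsplit, integral_add i1 i2]
      have b1 : ∫ w, K₁ (c' - w) * θ w ≤ L * Mg := by
        have : ∫ w, K₁ (c' - w) * θ w ≤ ∫ w, K₁ (c' - w) * Mg :=
          integral_mono i1 ((hK₁int.comp_sub_left c').mul_const Mg)
            (fun w => mul_le_mul_of_nonneg_left (hθb w) (hK₁nn _))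
        rwa [integral_mul_const, integral_sub_left_eq_self K₁ volume c'] at this
      have b2 : ∫ w, (C * Real.exp (-m * ‖c' - w‖)) * θ w ≤ C * ∫ w, θ w := by
        have : ∫ w, (C * Real.exp (-m * ‖c' - w‖)) * θ w ≤ ∫ w, C * θ w :=
          integral_mono i2 (hθi.const_mul C) (fun w => by
            have he : Real.exp (-m * ‖c' - w‖) ≤ 1 :=
              Real.exp_le_one_iff.mpr (by nlinarith [norm_nonneg (c' - w)])
            nlinarith [mul_nonneg (mul_nonneg hC (hθnn w)) (sub_nonneg.mpr he)])
        rwa [integral_const_mul] at this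
      linarith
  have hgMg : ∀ w, |g w| ≤ Mg := fun w => le_trans (hgφ w) (le_trans (hMg w) le_rfl)
  have hUpair := fun c' => pairInt c' (fun w => |g w|) g.continuous.abs
    (fun w => abs_nonneg _) hgMg (SchwartzMap.integrable g).abs
  have hUB : ∀ c' : E4, ∫ w, D (c' - w) * |g w| ≤ B₁ := by
    intro c'
    refine le_trans (hUpair c').2 ?_
    rw [hB₁def]
    nlinarith [hIg]
  -- inner estimate
  have inner_bound : ∀ s : ℝ, 0 ≤ s → ∀ x : E4,
      |∫ y, f x * K (x - y) * g (y + s • timeDir)| ≤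
        |f x| * ∫ w, D ((x + s • timeDir) - w) * |g w| := by
    intro s hs x
    set c := s • timeDir with hc
    have e1 : ∫ y, f x * K (x - y) * g (y + c) = f x * ∫ y, K (x - y) * g (y + c) := by
      simp only [mul_assoc]
      exact integral_const_mul _ _
    rw [e1, abs_mul]
    apply mul_le_mul_of_nonneg_left ?_ (abs_nonneg _)
    have step1 : |∫ y, K (x - y) * g (y + c)| ≤ ∫ y, ‖K (x - y) * g (y + c)‖ := by
      simpa [Real.norm_eq_abs] using
        norm_integral_le_integral_norm (μ := volume) (fun y => K (x - y) * g (y + c))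
    have hcomp : (fun y : E4 => D (x - y) * |g (y + c)|) =
        fun y => (fun w => D ((x + c) - w) * |g w|) (y + c) := by
      funext y
      simp only [add_sub_add_right_eq_sub]
    have step2 : ∫ y, ‖K (x - y) * g (y + c)‖ ≤ ∫ y, D (x - y) * |g (y + c)| := by
      refine integral_mono_of_nonneg (Filter.Eventually.of_forall fun y => norm_nonneg _)
        ?_ (Filter.Eventually.of_forall fun y => ?_)
      · rw [hcomp]
        exact ((hUpair (x + c)).1).comp_add_right c
      · simp only [norm_mul, Real.norm_eq_abs]
        exact mul_le_mul_of_nonneg_right (hKD _) (abs_nonneg _)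
    have step3 : ∫ y, D (x - y) * |g (y + c)| = ∫ w, D ((x + c) - w) * |g w| := by
      rw [hcomp]
      exact integral_add_right_eq_self (μ := volume) (fun w => D ((x + c) - w) * |g w|) c
    calc |∫ y, K (x - y) * g (y + c)| ≤ ∫ y, ‖K (x - y) * g (y + c)‖ := step1
    _ ≤ ∫ y, D (x - y) * |g (y + c)| := step2
    _ = ∫ w, D ((x + c) - w) * |g w| := step3
  -- outer estimate, given a pointwise bound on the inner integral
  have outer_bound : ∀ (s : ℝ) (E : ℝ), 0 ≤ s → 0 ≤ E →
      (∀ x : E4, ∫ w, D ((x + s • timeDir) - w) * |g w| ≤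
        2^k * (1+‖x‖)^k / (1+s)^k * B₁ + E) →
      |∫ x, ∫ y, f x * K (x - y) * g (y + s • timeDir)| ≤
        (2^k * B₁ / (1+s)^k + E) * Nf := by
    intro s E hs hE hin
    have h1s : (0:ℝ) < 1 + s := by linarith
    have step1 : |∫ x, ∫ y, f x * K (x - y) * g (y + s • timeDir)| ≤
        ∫ x, ‖∫ y, f x * K (x - y) * g (y + s • timeDir)‖ := by
      have h := norm_integral_le_integral_norm
        (μ := volume) (fun x => ∫ y, f x * K (x - y) * g (y + s • timeDir))
      rwa [Real.norm_eq_abs] at h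
    have step2 : ∫ x, ‖∫ y, f x * K (x - y) * g (y + s • timeDir)‖ ≤
        ∫ x, ψ x * (2^k * B₁ / (1+s)^k + E) := by
      refine integral_mono_of_nonneg (Filter.Eventually.of_forall fun x => norm_nonneg _)
        (hψint.mul_const _) (Filter.Eventually.of_forall fun x => ?_)
      have h2 : |∫ y, f x * K (x - y) * g (y + s • timeDir)| ≤
          |f x| * (2^k * (1+‖x‖)^k / (1+s)^k * B₁ + E) :=
        le_trans (inner_bound s hs x) (mul_le_mul_of_nonneg_left (hin x) (abs_nonneg _))
      simp only [Real.norm_eq_abs]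
      refine le_trans h2 ?_
      have e1 : |f x| * (2^k * (1+‖x‖)^k / (1+s)^k * B₁) =
          ψ x * (2^k * B₁ / (1+s)^k) := by
        simp only [hψdef]; ring
      have e2 : |f x| * E ≤ ψ x * E := mul_le_mul_of_nonneg_right (hfψ x) hE
      calc |f x| * (2^k * (1+‖x‖)^k / (1+s)^k * B₁ + E)
          = ψ x * (2^k * B₁ / (1+s)^k) + |f x| * E := by rw [← e1]; ring
      _ ≤ ψ x * (2^k * B₁ / (1+s)^k) + ψ x * E := by linarith
      _ = ψ x * (2^k * B₁ / (1+s)^k + E) := by ring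
    calc |∫ x, ∫ y, f x * K (x - y) * g (y + s • timeDir)| ≤
        ∫ x, ψ x * (2^k * B₁ / (1+s)^k + E) := le_trans step1 step2
    _ = Nf * (2^k * B₁ / (1+s)^k + E) := integral_mul_const _ _
    _ = (2^k * B₁ / (1+s)^k + E) * Nf := by ring
  -- uniform bound
  have unif : ∀ s : ℝ, 0 ≤ s →
      |∫ x, ∫ y, f x * K (x - y) * g (y + s • timeDir)| ≤
        (2^k * B₁ / (1+s)^k + B₁) * Nf := by
    intro s hs
    refine outer_bound s B₁ hs hB₁nn (fun x => le_trans (hUB (x + s • timeDir)) ?_)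
    have h0 : 0 ≤ 2^k * (1+‖x‖)^k / (1+s)^k * B₁ :=
      mul_nonneg (div_nonneg (by positivity) (pow_nonneg (by linarith) k)) hB₁nn
    linarith
  -- decay bound for large s
  have hin_dec : ∀ s : ℝ, 2*R₁ ≤ s → ∀ x : E4,
      ∫ w, D ((x + s • timeDir) - w) * |g w| ≤
        2^k * (1+‖x‖)^k / (1+s)^k * B₁ + C * Ng * Real.exp (-(m*s)/2) := by
    intro s hs2 x
    have hs : (0:ℝ) ≤ s := by linarith
    have h1s : (0:ℝ) < 1 + s := by linarith
    have hcn : ‖s • timeDir‖ = s := by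
      rw [norm_smul, norm_timeDir, mul_one, Real.norm_eq_abs, abs_of_nonneg hs]
    set c := s • timeDir with hcdef
    set a := 2^k * (1+‖x‖)^k / (1+s)^k with hadef
    have hann : 0 ≤ a :=
      div_nonneg (by positivity) (pow_nonneg (by linarith) k)
    have keypt : ∀ w : E4, D ((x+c) - w) * |g w| ≤
        a * (D ((x+c) - w) * φ w) + (C * Real.exp (-(m*s)/2)) * φ w := by
      intro w
      have hterm2 : 0 ≤ (C * Real.exp (-(m*s)/2)) * φ w :=
        mul_nonneg (mul_nonneg hC (Real.exp_pos _).le) (hφnn w)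
      rcases le_or_gt (s/2) (‖x‖ + ‖w‖) with hcase | hcase
      · have hfac : 1 ≤ a * (1+‖w‖)^k := by
          rw [hadef, div_mul_eq_mul_div, le_div_iff₀ (pow_pos h1s k), one_mul]
          calc (1+s)^k ≤ (2*(1+‖x‖)*(1+‖w‖))^k := by
                apply pow_le_pow_left₀ h1s.le
                nlinarith [norm_nonneg x, norm_nonneg w]
          _ = 2^k * (1+‖x‖)^k * (1+‖w‖)^k := by rw [mul_pow, mul_pow]
        have h1 : D ((x+c) - w) * |g w| ≤ a * (D ((x+c) - w) * φ w) := by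
          calc D ((x+c) - w) * |g w| = D ((x+c) - w) * (1 * |g w|) := by ring
          _ ≤ D ((x+c) - w) * ((a * (1+‖w‖)^k) * |g w|) :=
                mul_le_mul_of_nonneg_left
                  (mul_le_mul_of_nonneg_right hfac (abs_nonneg _)) (hDnn _)
          _ = a * (D ((x+c) - w) * φ w) := by simp only [hφdef]; ring
        exact h1.trans (le_add_of_nonneg_right hterm2)
      · have hzfar : R₁ < ‖(x+c) - w‖ ∧ s/2 ≤ ‖(x+c) - w‖ := by
          have e : (x+c) - w = c - (w - x) := by abel
          have h3 : ‖c‖ - ‖w - x‖ ≤ ‖c - (w - x)‖ := norm_sub_norm_le _ _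
          have h4 : ‖w - x‖ ≤ ‖w‖ + ‖x‖ := norm_sub_le w x
          rw [hcn] at h3
          constructor <;> (rw [e]; linarith)
        have hK0 : K₁ ((x+c) - w) = 0 := hK₁zero _ hzfar.1
        have hDle : D ((x+c) - w) ≤ C * Real.exp (-(m*s)/2) := by
          simp only [hDdef, hK0, zero_add]
          refine mul_le_mul_of_nonneg_left (Real.exp_le_exp.mpr ?_) hC
          nlinarith [hzfar.2]
        have h1 : D ((x+c) - w) * |g w| ≤ (C * Real.exp (-(m*s)/2)) * φ w :=
          mul_le_mul hDle (hgφ w) (abs_nonneg _)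
            (mul_nonneg hC (Real.exp_pos _).le)
        have h2 : 0 ≤ a * (D ((x+c) - w) * φ w) :=
          mul_nonneg hann (mul_nonneg (hDnn _) (hφnn _))
        exact h1.trans (le_add_of_nonneg_left h2)
    have hDφint : Integrable (fun w => D ((x+c) - w) * φ w) volume :=
      (pairInt (x+c) φ hφcont hφnn hMg hφint).1
    have hDφle : ∫ w, D ((x+c) - w) * φ w ≤ B₁ := by
      refine le_trans (pairInt (x+c) φ hφcont hφnn hMg hφint).2 ?_
      rw [hB₁def, hNgdef]
    have hWnn : 0 ≤ ∫ w, D ((x+c) - w) * φ w :=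
      integral_nonneg (fun w => mul_nonneg (hDnn _) (hφnn _))
    calc ∫ w, D ((x+c) - w) * |g w|
        ≤ ∫ w, (a * (D ((x+c) - w) * φ w) + (C * Real.exp (-(m*s)/2)) * φ w) := by
          refine integral_mono_of_nonneg
            (Filter.Eventually.of_forall fun w => mul_nonneg (hDnn _) (abs_nonneg _))
            ((hDφint.const_mul a).add (hφint.const_mul _))
            (Filter.Eventually.of_forall fun w => keypt w)
    _ = a * (∫ w, D ((x+c) - w) * φ w) + (C * Real.exp (-(m*s)/2)) * Ng := by
          rw [integral_add (hDφint.const_mul a) (hφint.const_mul _),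
            integral_const_mul, integral_const_mul, hNgdef]
    _ ≤ a * B₁ + (C * Real.exp (-(m*s)/2)) * Ng :=
          add_le_add_left (mul_le_mul_of_nonneg_left hDφle hann) _
    _ = 2^k * (1+‖x‖)^k / (1+s)^k * B₁ + C * Ng * Real.exp (-(m*s)/2) := by
          rw [hadef]; ring
  -- exponential beats polynomial
  have hexp : ∀ s : ℝ, 2*R₁ ≤ s →
      Real.exp (-(m*s)/2) * (1+s)^k ≤ (4/m)^k * (k.factorial : ℝ) := by
    intro s hs2
    have hs1 : (1:ℝ) ≤ s := by linarith
    have hms : (0:ℝ) ≤ m*s/2 := by positivity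
    have h2 : (m*s/2)^k / (k.factorial : ℝ) ≤ Real.exp (m*s/2) :=
      Real.pow_div_factorial_le_exp (m*s/2) hms k
    have hfacpos : (0:ℝ) < (k.factorial : ℝ) := by positivity
    have h6 : (m*s/2)^k ≤ (k.factorial : ℝ) * Real.exp (m*s/2) := by
      rw [div_le_iff₀ hfacpos] at h2; linarith
    have h3 : (1+s)^k ≤ (2*s)^k := pow_le_pow_left₀ (by linarith) (by linarith) k
    have h4 : (2*s)^k = (4/m)^k * (m*s/2)^k := by
      rw [← mul_pow]; congr 1; field_simp; ring
    have h5 : Real.exp (-(m*s)/2) * (m*s/2)^k ≤ (k.factorial : ℝ) := by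
      calc Real.exp (-(m*s)/2) * (m*s/2)^k
          ≤ Real.exp (-(m*s)/2) * ((k.factorial : ℝ) * Real.exp (m*s/2)) :=
            mul_le_mul_of_nonneg_left h6 (Real.exp_pos _).le
      _ = (k.factorial : ℝ) * (Real.exp (-(m*s)/2) * Real.exp (m*s/2)) := by ring
      _ = (k.factorial : ℝ) := by
            rw [← Real.exp_add, show -(m*s)/2 + m*s/2 = 0 by ring, Real.exp_zero, mul_one]
    calc Real.exp (-(m*s)/2) * (1+s)^k
        ≤ Real.exp (-(m*s)/2) * ((4/m)^k * (m*s/2)^k) := by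
          rw [← h4]; exact mul_le_mul_of_nonneg_left h3 (Real.exp_pos _).le
    _ = (4/m)^k * (Real.exp (-(m*s)/2) * (m*s/2)^k) := by ring
    _ ≤ (4/m)^k * (k.factorial : ℝ) := mul_le_mul_of_nonneg_left h5 (by positivity)
  set C₂ : ℝ := (4/m)^k * (k.factorial : ℝ) with hC₂def
  have hC₂nn : 0 ≤ C₂ := by positivity
  -- final constant
  refine ⟨max ((2^k*B₁ + B₁*(1+2*R₁)^k)*Nf) ((2^k*B₁ + C*Ng*C₂)*Nf), ?_, ?_⟩
  · refine le_trans ?_ (le_max_left _ _)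
    exact mul_nonneg (add_nonneg (mul_nonneg (by positivity) hB₁nn)
      (mul_nonneg hB₁nn (pow_nonneg (by linarith) k))) hNfnn
  · intro s hs
    have h1s : (0:ℝ) < 1 + s := by linarith
    have hpow : (0:ℝ) < (1+s)^k := pow_pos h1s k
    rcases le_total s (2*R₁) with hcase | hcase
    · calc |∫ x, ∫ y, f x * K (x - y) * g (y + s • timeDir)|
          ≤ (2^k * B₁ / (1+s)^k + B₁) * Nf := unif s hs
      _ = (2^k*B₁ + B₁*(1+s)^k)*Nf / (1+s)^k := by field_simp
      _ ≤ max ((2^k*B₁ + B₁*(1+2*R₁)^k)*Nf) ((2^k*B₁ + C*Ng*C₂)*Nf) / (1+s)^k := by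
          refine (div_le_div_iff_of_pos_right hpow).mpr (le_trans ?_ (le_max_left _ _))
          have hp : (1+s)^k ≤ (1+2*R₁)^k := pow_le_pow_left₀ h1s.le (by linarith) k
          have : B₁*(1+s)^k ≤ B₁*(1+2*R₁)^k := mul_le_mul_of_nonneg_left hp hB₁nn
          nlinarith [hNfnn]
    · have hb := outer_bound s (C * Ng * Real.exp (-(m*s)/2)) hs
        (mul_nonneg (mul_nonneg hC hNgnn) (Real.exp_pos _).le) (hin_dec s hcase)
      have h5 : C * Ng * Real.exp (-(m*s)/2) ≤ C*Ng*C₂ / (1+s)^k := by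
        rw [le_div_iff₀ hpow]
        calc C * Ng * Real.exp (-(m*s)/2) * (1+s)^k
            = (C*Ng) * (Real.exp (-(m*s)/2) * (1+s)^k) := by ring
        _ ≤ (C*Ng) * C₂ := mul_le_mul_of_nonneg_left (hexp s hcase) (mul_nonneg hC hNgnn)
        _ = C*Ng*C₂ := by ring
      calc |∫ x, ∫ y, f x * K (x - y) * g (y + s • timeDir)|
          ≤ (2^k * B₁ / (1+s)^k + C * Ng * Real.exp (-(m*s)/2)) * Nf := hb
      _ ≤ (2^k * B₁ / (1+s)^k + C*Ng*C₂ / (1+s)^k) * Nf :=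
          mul_le_mul_of_nonneg_right (by linarith) hNfnn
      _ = (2^k*B₁ + C*Ng*C₂)*Nf / (1+s)^k := by field_simp
      _ ≤ max ((2^k*B₁ + B₁*(1+2*R₁)^k)*Nf) ((2^k*B₁ + C*Ng*C₂)*Nf) / (1+s)^k :=
          (div_le_div_iff_of_pos_right hpow).mpr (le_max_right _ _)

end Aux

theorem gff_polynomial_clustering
    (μ : Measure FieldConfiguration) [IsProbabilityMeasure μ]
    (m : ℝ) (hm : 0 < m)
    (K : EuclideanSpace ℝ (Fin 4) → ℝ)
    (hKloc : LocallyIntegrable K volume)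
    (C R₀ : ℝ)
    (hKdecay : ∀ z : EuclideanSpace ℝ (Fin 4), R₀ ≤ ‖z‖ →
      |K z| ≤ C * ‖z‖ ^ (-(2 : ℝ)) * Real.exp (-m * ‖z‖))
    (S₂ : SchwartzTestFunction → SchwartzTestFunction → ℝ)
    (hS₂ : ∀ f g : SchwartzTestFunction, S₂ f g = ∫ x, ∫ y, f x * K (x - y) * g y)
    (hGauss : ∀ f g : SchwartzTestFunction,
      (∫ ω, Real.exp (ω (f + g)) ∂μ) =
        (∫ ω, Real.exp (ω f) ∂μ) * (∫ ω, Real.exp (ω g) ∂μ) * Real.exp (S₂ f g))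
    (τ : ℝ → SchwartzTestFunction → SchwartzTestFunction)
    (hτ : ∀ (s : ℝ) (g : SchwartzTestFunction) (x : EuclideanSpace ℝ (Fin 4)),
      τ s g x = g (x - s • timeDir))
    (T : ℝ → FieldConfiguration → FieldConfiguration)
    (hdual : ∀ (s : ℝ) (ω : FieldConfiguration) (g : SchwartzTestFunction),
      (T s ω) g = ω (τ (-s) g))
    (hinv : ∀ (s : ℝ) (g : SchwartzTestFunction),
      (∫ ω, Real.exp (ω (τ s g)) ∂μ) = ∫ ω, Real.exp (ω g) ∂μ)
    (f g : SchwartzTestFunction) (α : ℝ) (hα : 0 < α) :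
    ∃ C' : ℝ, ∀ s : ℝ, 0 ≤ s →
      |(∫ ω, Real.exp (ω f + (T s ω) g) ∂μ) -
          (∫ ω, Real.exp (ω f) ∂μ) * (∫ ω, Real.exp (ω g) ∂μ)| ≤
        C' * (1 + s) ^ (-α) := by
  set A := ∫ ω, Real.exp (ω f) ∂μ with hA
  set B := ∫ ω, Real.exp (ω g) ∂μ with hB
  set k : ℕ := max 1 ⌈α⌉₊ with hk
  have hαk : α ≤ (k : ℝ) := by
    calc α ≤ (⌈α⌉₊ : ℝ) := Nat.le_ceil α
    _ ≤ (k : ℝ) := by exact_mod_cast Nat.cast_le.mpr (le_max_right _ _)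
  obtain ⟨C₃, hC₃nn, hC₃⟩ := decay_core m hm K hKloc C R₀ hKdecay f g k
  -- rewrite the correlation
  have key : ∀ s : ℝ,
      (∫ ω, Real.exp (ω f + (T s ω) g) ∂μ) = A * B * Real.exp (S₂ f (τ (-s) g)) := by
    intro s
    have hfe : (fun ω : FieldConfiguration => Real.exp (ω f + (T s ω) g)) =
        fun ω => Real.exp (ω (f + τ (-s) g)) := by
      funext ω
      rw [hdual s ω g, ← map_add]
    rw [hfe, hGauss f (τ (-s) g), hinv (-s) g]
  have S₂form : ∀ s : ℝ, S₂ f (τ (-s) g) =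
      ∫ x, ∫ y, f x * K (x - y) * g (y + s • timeDir) := by
    intro s
    rw [hS₂]
    simp only [hτ, neg_smul, sub_neg_eq_add]
  refine ⟨|A| * |B| * Real.exp C₃ * C₃, fun s hs => ?_⟩
  have h1s : (0:ℝ) < 1 + s := by linarith
  have hpow : (0:ℝ) < (1+s)^k := pow_pos h1s k
  have hSb : |S₂ f (τ (-s) g)| ≤ C₃ / (1+s)^k := by
    rw [S₂form s]; exact hC₃ s hs
  have hSb' : |S₂ f (τ (-s) g)| ≤ C₃ := by
    refine hSb.trans ?_
    have h1 : (1:ℝ) ≤ (1+s)^k := one_le_pow₀ (by linarith)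
    calc C₃ / (1+s)^k ≤ C₃ / 1 := by
          apply div_le_div_of_nonneg_left hC₃nn ?_ h1 <;> norm_num
    _ = C₃ := by norm_num
  have hz := abs_exp_sub_one_le (S₂ f (τ (-s) g))
  have hmono : Real.exp |S₂ f (τ (-s) g)| ≤ Real.exp C₃ := Real.exp_le_exp.mpr hSb'
  have hrpow : ((1+s)^k)⁻¹ ≤ (1+s) ^ (-α) := by
    have h1 : ((1+s):ℝ) ^ (-(k:ℝ)) = ((1+s)^k)⁻¹ := by
      rw [Real.rpow_neg h1s.le, Real.rpow_natCast]
    rw [← h1]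
    exact Real.rpow_le_rpow_of_exponent_le (by linarith) (by linarith)
  calc |(∫ ω, Real.exp (ω f + (T s ω) g) ∂μ) - A * B|
      = |A| * |B| * |Real.exp (S₂ f (τ (-s) g)) - 1| := by
        rw [key s, show A * B * Real.exp (S₂ f (τ (-s) g)) - A * B
            = A * B * (Real.exp (S₂ f (τ (-s) g)) - 1) by ring, abs_mul, abs_mul]
  _ ≤ |A| * |B| * ((C₃/(1+s)^k) * Real.exp C₃) := by
        refine mul_le_mul_of_nonneg_left ?_ (by positivity)
        calc |Real.exp (S₂ f (τ (-s) g)) - 1|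
            ≤ |S₂ f (τ (-s) g)| * Real.exp |S₂ f (τ (-s) g)| := hz
        _ ≤ (C₃/(1+s)^k) * Real.exp C₃ :=
            mul_le_mul hSb hmono (Real.exp_pos _).le (by positivity)
  _ = (|A| * |B| * Real.exp C₃ * C₃) * ((1+s)^k)⁻¹ := by
        field_simp
  _ ≤ (|A| * |B| * Real.exp C₃ * C₃) * (1+s) ^ (-α) :=
        mul_le_mul_of_nonneg_left hrpow (by positivity)
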